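/- Let C_axis ∈ ℂ^{m×m×m} be the axis core tensor and let X ∈ ℂ^{m×m} be an invertible matrix with [[C_axis; X, X, X]] = C_axis. If the standard basis vector e_m = (0,…,0,1)ᵀ is an eigenvector of X, then e_m is also an eigenvector of the transpose Xᵀ. -/

import Mathlib

open Matrix

/-- The axis core tensor. -/
noncomputable def caxis (𝕂 : Type*) [DivisionRing 𝕂] (m : ℕ) :
    Fin m → Fin m → Fin m → 𝕂 := fun i j k =>
  if i < j ∧ j < k then 1
  else if (i < j ∧ j = k) ∨ (i = j ∧ j < k) then 1 / 2
  else if i = j ∧ j = k then 1 / 6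
  else 0

/-- The congruence action on an `m × m × m` tensor. -/
def congrAct3 {𝕂 : Type*} [CommRing 𝕂] {m : ℕ} (C : Fin m → Fin m → Fin m → 𝕂)
    (X : Matrix (Fin m) (Fin m) 𝕂) : Fin m → Fin m → Fin m → 𝕂 :=
  fun α β γ => ∑ i, ∑ j, ∑ k, C i j k * X α i * X β j * X γ k

/-- The last standard basis vector `e_m` of `𝕂^m`. -/
def lastBasis (𝕂 : Type*) [Semiring 𝕂] (m : ℕ) [NeZero m] : Fin m → 𝕂 :=
  Pi.single ⟨m - 1, Nat.sub_lt (Nat.pos_of_neZero m) Nat.one_pos⟩ 1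

/-- If an invertible matrix `X` stabilizes the axis core tensor under congruence
and `e_m` is an eigenvector of `X`, then `e_m` is also an eigenvector of `Xᵀ`. -/
theorem transpose_eigenvector_of_axis_stabilizer (m : ℕ) [NeZero m]
    (X : Matrix (Fin m) (Fin m) ℂ) (hX : IsUnit X)
    (hstab : congrAct3 (caxis ℂ m) X = caxis ℂ m)
    (hev : ∃ μ : ℂ, X.mulVec (lastBasis ℂ m) = μ • lastBasis ℂ m) :
    ∃ ν : ℂ, Xᵀ.mulVec (lastBasis ℂ m) = ν • lastBasis ℂ m := by
  obtain ⟨μ, hev⟩ := hev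
  set M : Fin m := ⟨m - 1, Nat.sub_lt (Nat.pos_of_neZero m) Nat.one_pos⟩ with hM
  have hle : ∀ j : Fin m, ¬ M < j := by
    intro j hj
    have h1 : j.val ≤ m - 1 := Nat.le_pred_of_lt j.isLt
    have h2 : M.val < j.val := hj
    simp [hM] at h2
    omega
  -- column M of X
  have hcol : ∀ α, X α M = if α = M then μ else 0 := by
    intro α
    have h1 := congrFun hev α
    simp only [lastBasis, ← hM, mulVec_single, Pi.smul_apply, Pi.single_apply,
      smul_eq_mul, mul_one, Matrix.col_apply, op_smul_eq_mul] at h1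
    rw [h1]
    by_cases h : α = M <;> simp [h]
  -- μ ≠ 0
  have hμ : μ ≠ 0 := by
    intro h0
    have hinj : Function.Injective (X.mulVec) := mulVec_injective_iff_isUnit.2 hX
    have : lastBasis ℂ m = 0 := by
      apply hinj
      rw [hev, h0, zero_smul, mulVec_zero]
    have := congrFun this M
    simp [lastBasis, ← hM, Pi.single_apply] at this
  set r : Fin m → ℂ := fun i => X M i with hr
  set A : Matrix (Fin m) (Fin m) ℂ :=
    Matrix.of (fun j k => ∑ i, caxis ℂ m i j k * r i) with hA
  set A' : Matrix (Fin m) (Fin m) ℂ :=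
    Matrix.of (fun j k => if M = j ∧ j = k then 1/6 * (μ⁻¹ * μ⁻¹) else 0) with hA'
  -- caxis at first index M
  have hcax : ∀ β γ : Fin m, caxis ℂ m M β γ = if M = β ∧ β = γ then 1/6 else 0 := by
    intro β γ
    unfold caxis
    have h1 : ¬ M < β := hle β
    have h2 : ¬ (M = β ∧ β < γ) := by
      rintro ⟨rfl, h⟩; exact hle γ h
    simp [h1, h2]
  have hXAX : X * A * Xᵀ = X * A' * Xᵀ := by
    ext β γ
    have lhs : (X * A * Xᵀ) β γ = congrAct3 (caxis ℂ m) X M β γ := by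
      calc (X * A * Xᵀ) β γ
          = ∑ k, ∑ j, X β j * A j k * X γ k := by
            simp only [Matrix.mul_apply, transpose_apply, Finset.sum_mul]
        _ = ∑ j, ∑ k, X β j * A j k * X γ k := Finset.sum_comm
        _ = ∑ j, ∑ k, ∑ i, caxis ℂ m i j k * X M i * X β j * X γ k := by
            refine Finset.sum_congr rfl fun j _ => Finset.sum_congr rfl fun k _ => ?_
            simp only [hA, Matrix.of_apply]
            rw [Finset.mul_sum, Finset.sum_mul]
            exact Finset.sum_congr rfl fun i _ => by rw [hr]; ring
        _ = ∑ j, ∑ i, ∑ k, caxis ℂ m i j k * X M i * X β j * X γ k :=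
            Finset.sum_congr rfl fun j _ => Finset.sum_comm
        _ = ∑ i, ∑ j, ∑ k, caxis ℂ m i j k * X M i * X β j * X γ k := Finset.sum_comm
        _ = congrAct3 (caxis ℂ m) X M β γ := rfl
    have rhs : (X * A' * Xᵀ) β γ = if M = β ∧ β = γ then 1/6 else 0 := by
      simp only [Matrix.mul_apply, transpose_apply, hA', Matrix.of_apply]
      have inner : ∀ k, (∑ j, X β j * if M = j ∧ j = k then 1/6 * (μ⁻¹ * μ⁻¹) else 0)
          = if M = k then X β M * (1/6 * (μ⁻¹ * μ⁻¹)) else 0 := by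
        intro k
        rw [Finset.sum_eq_single M]
        · by_cases h : M = k <;> simp [h]
        · intro j _ hj
          have hc : ¬ (M = j ∧ j = k) := fun h => hj h.1.symm
          rw [if_neg hc, mul_zero]
        · simp
      simp only [inner, ite_mul, zero_mul]
      rw [Finset.sum_eq_single M]
      · rw [hcol β, hcol γ]
        simp only [if_pos rfl]
        by_cases h1 : β = M <;> by_cases h2 : γ = M
        · subst h1; subst h2
          simp only [if_pos rfl, and_self, if_pos]
          field_simp
        · simp [h1, h2, eq_comm]
        · simp [h1, h2, eq_comm]
        · simp [h1, h2, eq_comm]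
      · intro k _ hk
        rw [if_neg (Ne.symm hk)]
      · simp
    rw [lhs, rhs, hstab, hcax]
  have hAeq : A = A' := by
    have hXT : IsUnit Xᵀ := (isUnit_transpose X).2 hX
    have h1 : A * Xᵀ = A' * Xᵀ := hX.mul_left_cancel
      (by rw [← Matrix.mul_assoc, ← Matrix.mul_assoc]; exact hXAX)
    exact hXT.mul_right_cancel h1
  -- strong induction: r j = 0 for j ≠ M
  have hrz : ∀ n : ℕ, ∀ j : Fin m, j.val = n → j ≠ M → r j = 0 := by
    intro n
    induction n using Nat.strong_induction_on with
    | _ n ih =>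
      intro j hjn hjM
      have hAjj := congrFun (congrFun (congrArg (fun B => fun a b => B a b) hAeq) j) j
      simp only [hA, hA', Matrix.of_apply] at hAjj
      simp only [and_true] at hAjj
      rw [if_neg (fun h : M = j => hjM h.symm)] at hAjj
      have hsum : ∑ i, caxis ℂ m i j j * r i = (1/6) * r j := by
        rw [Finset.sum_eq_single j]
        · congr 1
          unfold caxis
          simp [lt_irrefl]
        · intro i _ hij
          by_cases hlt : i < j
          · have hiM : i ≠ M := by
              intro h; subst h; exact hle j hlt
            have : r i = 0 := ih i.val (by rw [← hjn]; exact hlt) i rfl hiM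
            rw [this, mul_zero]
          · have : caxis ℂ m i j j = 0 := by
              unfold caxis
              simp [hlt, hij, lt_irrefl]
            rw [this, zero_mul]
        · simp
      rw [hsum] at hAjj
      have : (1/6 : ℂ) ≠ 0 := by norm_num
      field_simp at hAjj
      simpa using hAjj
  refine ⟨X M M, ?_⟩
  funext α
  simp only [lastBasis, ← hM, mulVec_single, Pi.smul_apply, Pi.single_apply,
    smul_eq_mul, mul_one, transpose_apply]
  by_cases h : α = M
  · simp [h]
  · simp [h]
    exact hrz α.val α rfl h
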